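/- arXiv:2307.00881 — 3 statements merged into one kernel-verified Lean document; each statement's English description precedes it below -/
import Mathlib

section
/- Let ρ₀ and σ be density matrices on a d-dimensional Hilbert space, and let V be a subspace of Hermitian matrices. If the orthogonal projections (with respect to the Hilbert–Schmidt inner product) of ρ₀ and σ onto V are both equal to ϱ, then the Hilbert–Schmidt distance satisfies d_HS(ρ₀, σ) ≤ √(1 − Tr(ϱ²)) + √(Tr(ρ₀²) − Tr(ϱ²)). -/
open Matrix ComplexOrder

noncomputable def toE {d : ℕ} (A : Matrix (Fin d) (Fin d) ℂ) : EuclideanSpace ℂ (Fin d × Fin d) :=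
  (WithLp.equiv 2 ((Fin d × Fin d) → ℂ)).symm fun p => A p.1 p.2

lemma toE_add {d : ℕ} (A B : Matrix (Fin d) (Fin d) ℂ) : toE (A + B) = toE A + toE B := rfl

lemma norm_toE {d : ℕ} (A : Matrix (Fin d) (Fin d) ℂ) (hA : A.IsHermitian) :
    ‖toE A‖ = Real.sqrt ((Matrix.trace (A * A)).re) := by
  rw [EuclideanSpace.norm_eq]
  congr 1
  have h1 : A * A = Aᴴ * A := by rw [hA.eq]
  rw [h1, Matrix.trace, Complex.re_sum, Fintype.sum_prod_type]
  rw [Finset.sum_comm]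
  refine Finset.sum_congr rfl fun i _ => ?_
  simp only [Matrix.diag_apply, Matrix.mul_apply, Matrix.conjTranspose_apply, Complex.re_sum]
  refine Finset.sum_congr rfl fun j _ => ?_
  simp [toE, Complex.star_def, Complex.conj_mul', Complex.normSq_eq_norm_sq]
  rw [← Complex.ofReal_pow, Complex.ofReal_re]

lemma trace_sq_le_one {d : ℕ} (σ : Matrix (Fin d) (Fin d) ℂ) (hσ : σ.PosSemidef)
    (htσ : σ.trace = 1) : (Matrix.trace (σ * σ)).re ≤ 1 := by
  have hH := hσ.1
  have hspec := hH.spectral_theorem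
  simp only [Unitary.conjStarAlgAut_apply, Unitary.coe_star] at hspec
  set U : Matrix (Fin d) (Fin d) ℂ := (hH.eigenvectorUnitary : Matrix (Fin d) (Fin d) ℂ) with hUdef
  set D : Matrix (Fin d) (Fin d) ℂ := diagonal ((↑) ∘ hH.eigenvalues) with hDdef
  have hU : star U * U = 1 := Matrix.mem_unitaryGroup_iff'.mp hH.eigenvectorUnitary.2
  have h2 : σ * σ = U * (D * D) * star U := by
    conv_lhs => rw [hspec]
    simp only [Matrix.mul_assoc]
    rw [← Matrix.mul_assoc (star U) U, hU, Matrix.one_mul]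
    rfl
  have h3 : Matrix.trace (σ * σ) = ∑ i, (hH.eigenvalues i : ℂ)^2 := by
    rw [h2, Matrix.trace_mul_cycle, ← Matrix.mul_assoc, hU, Matrix.one_mul, hDdef,
      diagonal_mul_diagonal, trace_diagonal]
    simp [sq]
  have h4 : Matrix.trace σ = ∑ i, (hH.eigenvalues i : ℂ) := by
    conv_lhs => rw [hspec]
    rw [Matrix.trace_mul_cycle, hU, Matrix.one_mul, trace_diagonal]
    rfl
  have h5 : ∑ i, hH.eigenvalues i = 1 := by
    have := congrArg Complex.re (h4 ▸ htσ)
    simpa using this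
  have h6 : (Matrix.trace (σ * σ)).re = ∑ i, (hH.eigenvalues i)^2 := by
    rw [h3, Complex.re_sum]
    exact Finset.sum_congr rfl fun i _ => by rw [← Complex.ofReal_pow, Complex.ofReal_re]
  rw [h6]
  calc ∑ i, (hH.eigenvalues i)^2 ≤ (∑ i, hH.eigenvalues i)^2 :=
        Finset.sum_sq_le_sq_sum_of_nonneg (fun i _ => hσ.eigenvalues_nonneg i)
    _ = 1 := by rw [h5]; norm_num

/-- If density matrices ρ₀ and σ have the same orthogonal projection ϱ
(w.r.t. the Hilbert–Schmidt inner product) onto a subspace V of Hermitian matrices, then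
d_HS(ρ₀,σ) ≤ √(1 − Tr ϱ²) + √(Tr ρ₀² − Tr ϱ²). -/
theorem stmt0 {d : ℕ} (ρ₀ σ ϱ : Matrix (Fin d) (Fin d) ℂ)
    (V : Submodule ℝ (Matrix (Fin d) (Fin d) ℂ))
    (hVH : ∀ A ∈ V, A.IsHermitian)
    (hρ₀ : ρ₀.PosSemidef) (htρ₀ : ρ₀.trace = 1)
    (hσ : σ.PosSemidef) (htσ : σ.trace = 1)
    (hϱV : ϱ ∈ V)
    (hρ₀proj : ∀ A ∈ V, Matrix.trace ((ρ₀ - ϱ) * A) = 0)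
    (hσproj : ∀ A ∈ V, Matrix.trace ((σ - ϱ) * A) = 0) :
    Real.sqrt ((Matrix.trace ((ρ₀ - σ) * (ρ₀ - σ))).re) ≤
      Real.sqrt (1 - (Matrix.trace (ϱ * ϱ)).re) +
        Real.sqrt ((Matrix.trace (ρ₀ * ρ₀)).re - (Matrix.trace (ϱ * ϱ)).re) := by
  have hϱH : ϱ.IsHermitian := hVH ϱ hϱV
  have hρH := hρ₀.1
  have hσH := hσ.1
  -- inner product identities
  have e1 : Matrix.trace (ρ₀ * ϱ) = Matrix.trace (ϱ * ϱ) := by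
    have := hρ₀proj ϱ hϱV
    rwa [sub_mul, trace_sub, sub_eq_zero] at this
  have e2 : Matrix.trace (σ * ϱ) = Matrix.trace (ϱ * ϱ) := by
    have := hσproj ϱ hϱV
    rwa [sub_mul, trace_sub, sub_eq_zero] at this
  -- Pythagoras
  have p1 : Matrix.trace ((ρ₀ - ϱ) * (ρ₀ - ϱ)) =
      Matrix.trace (ρ₀ * ρ₀) - Matrix.trace (ϱ * ϱ) := by
    simp only [sub_mul, mul_sub, trace_sub]
    rw [trace_mul_comm ϱ ρ₀, e1]
    ring
  have p2 : Matrix.trace ((ϱ - σ) * (ϱ - σ)) =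
      Matrix.trace (σ * σ) - Matrix.trace (ϱ * ϱ) := by
    simp only [sub_mul, mul_sub, trace_sub]
    rw [trace_mul_comm ϱ σ, e2]
    ring
  -- rewrite LHS via the Euclidean norm and apply the triangle inequality
  have h1 : (ρ₀ - σ) = (ϱ - σ) + (ρ₀ - ϱ) := by abel
  have key1 : Real.sqrt ((Matrix.trace ((ρ₀ - σ) * (ρ₀ - σ))).re) = ‖toE (ρ₀ - σ)‖ :=
    (norm_toE _ (hρH.sub hσH)).symm
  have key2 : ‖toE (ϱ - σ)‖ = Real.sqrt ((Matrix.trace ((ϱ - σ) * (ϱ - σ))).re) :=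
    norm_toE _ (hϱH.sub hσH)
  have key3 : ‖toE (ρ₀ - ϱ)‖ = Real.sqrt ((Matrix.trace ((ρ₀ - ϱ) * (ρ₀ - ϱ))).re) :=
    norm_toE _ (hρH.sub hϱH)
  have htri : ‖toE (ρ₀ - σ)‖ ≤ ‖toE (ϱ - σ)‖ + ‖toE (ρ₀ - ϱ)‖ := by
    rw [h1, toE_add]
    exact norm_add_le _ _
  have hσ2 : (Matrix.trace (σ * σ)).re ≤ 1 := trace_sq_le_one σ hσ htσ
  have b1 : ‖toE (ϱ - σ)‖ ≤ Real.sqrt (1 - (Matrix.trace (ϱ * ϱ)).re) := by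
    rw [key2, p2, Complex.sub_re]
    exact Real.sqrt_le_sqrt (by linarith)
  have b2 : ‖toE (ρ₀ - ϱ)‖ =
      Real.sqrt ((Matrix.trace (ρ₀ * ρ₀)).re - (Matrix.trace (ϱ * ϱ)).re) := by
    rw [key3, p1, Complex.sub_re]
  rw [key1, ← b2]
  exact htri.trans (add_le_add_left b1 _)
end

section
/- Let ρ₀ and σ be density matrices with the same orthogonal projection ϱ onto a subspace of Hermitian matrices (Hilbert–Schmidt inner product). Then Tr(ρ₀σ) ≥ Tr(ϱ²) − √(Tr(ρ₀²) − Tr(ϱ²)) · √(1 − Tr(ϱ²)). -/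
open Matrix ComplexOrder

/-- Hilbert–Schmidt Cauchy–Schwarz for Hermitian matrices (one-sided form). -/
lemma hs_cs {d : ℕ} (X Y : Matrix (Fin d) (Fin d) ℂ)
    (hX : X.IsHermitian) (hY : Y.IsHermitian) :
    -((Matrix.trace (X * Y)).re) ≤
      Real.sqrt ((Matrix.trace (X * X)).re) * Real.sqrt ((Matrix.trace (Y * Y)).re) := by
  classical
  set x : EuclideanSpace ℂ (Fin d × Fin d) := WithLp.toLp 2 (fun p => X p.1 p.2) with hxdef
  set y : EuclideanSpace ℂ (Fin d × Fin d) := WithLp.toLp 2 (fun p => Y p.1 p.2) with hydef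
  have hin : Matrix.trace (X * Y) = inner ℂ y x := by
    rw [PiLp.inner_apply]
    simp only [RCLike.inner_apply, Matrix.trace, Matrix.diag, Matrix.mul_apply]
    rw [Fintype.sum_prod_type]
    refine Finset.sum_congr rfl fun i _ => Finset.sum_congr rfl fun j _ => ?_
    have : (starRingEnd ℂ) (y (i, j)) = Y j i := hY.apply j i
    rw [this]
  have hnorm : ∀ (Z : Matrix (Fin d) (Fin d) ℂ) (hZ : Z.IsHermitian)
      (z : EuclideanSpace ℂ (Fin d × Fin d)), (∀ p, z p = Z p.1 p.2) →
      Real.sqrt ((Matrix.trace (Z * Z)).re) = ‖z‖ := by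
    intro Z hZ z hz
    rw [EuclideanSpace.norm_eq]
    congr 1
    simp only [Matrix.trace, Matrix.diag, Matrix.mul_apply]
    rw [Fintype.sum_prod_type, Complex.re_sum]
    refine Finset.sum_congr rfl fun i _ => ?_
    rw [Complex.re_sum]
    refine Finset.sum_congr rfl fun j _ => ?_
    have h1 : Z j i = (starRingEnd ℂ) (Z i j) := (hZ.apply j i).symm
    rw [hz (i, j), h1, Complex.mul_conj]
    simp [Complex.normSq_eq_norm_sq, ← Complex.ofReal_pow]
  have hx' : Real.sqrt ((Matrix.trace (X * X)).re) = ‖x‖ := hnorm X hX x (fun _ => rfl)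
  have hy' : Real.sqrt ((Matrix.trace (Y * Y)).re) = ‖y‖ := hnorm Y hY y (fun _ => rfl)
  rw [hin, hx', hy']
  have h1 : -((inner ℂ y x : ℂ)).re ≤ ‖(inner ℂ y x : ℂ)‖ := by
    have := abs_le.mp (le_refl |((inner ℂ y x : ℂ)).re|)
    calc -((inner ℂ y x : ℂ)).re ≤ |((inner ℂ y x : ℂ)).re| := neg_le_abs _
      _ ≤ ‖(inner ℂ y x : ℂ)‖ := Complex.abs_re_le_norm _
  refine h1.trans ?_
  calc ‖(inner ℂ y x : ℂ)‖ ≤ ‖y‖ * ‖x‖ := norm_inner_le_norm _ _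
    _ = ‖x‖ * ‖y‖ := mul_comm _ _

/-- For a PSD matrix with unit trace, Tr(M²) ≤ 1. -/
lemma trace_sq_le_one_s2 {d : ℕ} (M : Matrix (Fin d) (Fin d) ℂ)
    (hM : M.PosSemidef) (htM : M.trace = 1) :
    (Matrix.trace (M * M)).re ≤ 1 := by
  classical
  have hH := hM.1
  set U : Matrix (Fin d) (Fin d) ℂ := (hH.eigenvectorUnitary : Matrix (Fin d) (Fin d) ℂ)
  set D : Matrix (Fin d) (Fin d) ℂ := diagonal (RCLike.ofReal ∘ hH.eigenvalues)
  have hspec : M = U * D * star U := hH.spectral_theorem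
  have hU1 : U * star U = 1 := (Matrix.mem_unitaryGroup_iff).mp hH.eigenvectorUnitary.2
  have hU2 : star U * U = 1 := (Matrix.mem_unitaryGroup_iff').mp hH.eigenvectorUnitary.2
  have htr : Matrix.trace M = ∑ i, (hH.eigenvalues i : ℂ) := by
    rw [congrArg Matrix.trace hspec, Matrix.trace_mul_cycle, hU2, Matrix.one_mul]
    simp [D, Matrix.trace_diagonal]
  have htr2 : Matrix.trace (M * M) = ∑ i, (hH.eigenvalues i : ℂ) ^ 2 := by
    have : M * M = U * (D * D) * star U := by
      rw [hspec]
      calc U * D * star U * (U * D * star U)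
          = U * D * (star U * U) * D * star U := by noncomm_ring
        _ = U * (D * D) * star U := by rw [hU2]; noncomm_ring
    rw [congrArg Matrix.trace this, Matrix.trace_mul_cycle, hU2, Matrix.one_mul]
    simp [D, Matrix.diagonal_mul_diagonal, Matrix.trace_diagonal, sq]
  have hsum1 : ∑ i, hH.eigenvalues i = 1 := by
    have := htr.symm.trans htM
    have h2 : ((∑ i, hH.eigenvalues i : ℝ) : ℂ) = 1 := by push_cast [this]; rfl
    exact_mod_cast h2
  have hnonneg : ∀ i, 0 ≤ hH.eigenvalues i := fun i => hM.eigenvalues_nonneg i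
  have hle1 : ∀ i, hH.eigenvalues i ≤ 1 := by
    intro i
    rw [← hsum1]
    exact Finset.single_le_sum (fun j _ => hnonneg j) (Finset.mem_univ i)
  have : (Matrix.trace (M * M)).re = ∑ i, hH.eigenvalues i ^ 2 := by
    rw [htr2]; simp [Complex.re_sum, ← Complex.ofReal_pow]
  rw [this, ← hsum1]
  refine Finset.sum_le_sum fun i _ => ?_
  nlinarith [hnonneg i, hle1 i]

/-- Tr(ρ₀σ) ≥ Tr(ϱ²) − √(Tr ρ₀² − Tr ϱ²)·√(1 − Tr ϱ²) when ρ₀ and σ share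
the same projection ϱ onto a subspace V of Hermitian matrices. -/
theorem stmt2 {d : ℕ} (ρ₀ σ ϱ : Matrix (Fin d) (Fin d) ℂ)
    (V : Submodule ℝ (Matrix (Fin d) (Fin d) ℂ))
    (hVH : ∀ A ∈ V, A.IsHermitian)
    (hρ₀ : ρ₀.PosSemidef) (htρ₀ : ρ₀.trace = 1)
    (hσ : σ.PosSemidef) (htσ : σ.trace = 1)
    (hϱV : ϱ ∈ V)
    (hρ₀proj : ∀ A ∈ V, Matrix.trace ((ρ₀ - ϱ) * A) = 0)
    (hσproj : ∀ A ∈ V, Matrix.trace ((σ - ϱ) * A) = 0) :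
    (Matrix.trace (ρ₀ * σ)).re ≥
      (Matrix.trace (ϱ * ϱ)).re -
        Real.sqrt ((Matrix.trace (ρ₀ * ρ₀)).re - (Matrix.trace (ϱ * ϱ)).re) *
          Real.sqrt (1 - (Matrix.trace (ϱ * ϱ)).re) := by
  have hϱH : ϱ.IsHermitian := hVH ϱ hϱV
  set X := ρ₀ - ϱ with hXdef
  set Y := σ - ϱ with hYdef
  have hXH : X.IsHermitian := hρ₀.1.sub hϱH
  have hYH : Y.IsHermitian := hσ.1.sub hϱH
  have h1 : Matrix.trace (X * ϱ) = 0 := hρ₀proj ϱ hϱV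
  have h2 : Matrix.trace (Y * ϱ) = 0 := hσproj ϱ hϱV
  have h1' : Matrix.trace (ϱ * X) = 0 := by rw [Matrix.trace_mul_comm]; exact h1
  have h2' : Matrix.trace (ϱ * Y) = 0 := by rw [Matrix.trace_mul_comm]; exact h2
  -- decomposition identities
  have e3 : Matrix.trace (X * Y) = Matrix.trace (ρ₀ * σ) - Matrix.trace (ϱ * ϱ) := by
    have expand : ρ₀ * σ = (X + ϱ) * (Y + ϱ) := by rw [hXdef, hYdef]; noncomm_ring
    rw [expand]
    simp only [Matrix.add_mul, Matrix.mul_add, Matrix.trace_add]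
    rw [h1, h2']
    ring
  have e4 : Matrix.trace (X * X) = Matrix.trace (ρ₀ * ρ₀) - Matrix.trace (ϱ * ϱ) := by
    have expand : ρ₀ * ρ₀ = (X + ϱ) * (X + ϱ) := by rw [hXdef]; noncomm_ring
    rw [expand]
    simp only [Matrix.add_mul, Matrix.mul_add, Matrix.trace_add]
    rw [h1, h1']
    ring
  have e5 : Matrix.trace (Y * Y) = Matrix.trace (σ * σ) - Matrix.trace (ϱ * ϱ) := by
    have expand : σ * σ = (Y + ϱ) * (Y + ϱ) := by rw [hYdef]; noncomm_ring
    rw [expand]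
    simp only [Matrix.add_mul, Matrix.mul_add, Matrix.trace_add]
    rw [h2, h2']
    ring
  have hcs := hs_cs X Y hXH hYH
  rw [e3, e4, e5] at hcs
  simp only [Complex.sub_re] at hcs
  have hB : (Matrix.trace (σ * σ)).re ≤ 1 := trace_sq_le_one_s2 σ hσ htσ
  have hmono : Real.sqrt ((Matrix.trace (σ * σ)).re - (Matrix.trace (ϱ * ϱ)).re) ≤
      Real.sqrt (1 - (Matrix.trace (ϱ * ϱ)).re) := Real.sqrt_le_sqrt (by linarith)
  have hfinal : Real.sqrt ((Matrix.trace (ρ₀ * ρ₀)).re - (Matrix.trace (ϱ * ϱ)).re) *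
      Real.sqrt ((Matrix.trace (σ * σ)).re - (Matrix.trace (ϱ * ϱ)).re) ≤
      Real.sqrt ((Matrix.trace (ρ₀ * ρ₀)).re - (Matrix.trace (ϱ * ϱ)).re) *
      Real.sqrt (1 - (Matrix.trace (ϱ * ϱ)).re) :=
    mul_le_mul_of_nonneg_left hmono (Real.sqrt_nonneg _)
  linarith [hcs, hfinal]
end

section
/- Let ρ₀ be a density matrix, V ⊆ W two subspaces of Hermitian matrices, and let ϱ_V, ϱ_W be the orthogonal projections of ρ₀ onto V and W respectively (Hilbert–Schmidt inner product). Then the bound B(ϱ) = √(1 − Tr(ϱ²)) + √(Tr(ρ₀²) − Tr(ϱ²)) satisfies B(ϱ_W) ≤ B(ϱ_V); i.e., enlarging the measured subspace never worsens the distance bound. -/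
open Matrix ComplexOrder

private lemma trace_sq_re_nonneg {d : ℕ} (D : Matrix (Fin d) (Fin d) ℂ)
    (hD : D.IsHermitian) : 0 ≤ (Matrix.trace (D * D)).re := by
  have : D * D = Dᴴ * D := by rw [hD.eq]
  rw [this, Matrix.trace, Complex.re_sum]
  apply Finset.sum_nonneg
  intro i _
  simp only [Matrix.diag_apply, Matrix.mul_apply, Matrix.conjTranspose_apply,
    Complex.re_sum]
  apply Finset.sum_nonneg
  intro j _
  simpa [Complex.normSq_apply] using Complex.normSq_nonneg (D j i)

/-- monotonicity of the bound B(ϱ) = √(1 − Tr ϱ²) + √(Tr ρ₀² − Tr ϱ²)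
under enlarging the measured subspace: if V ⊆ W then B(ϱ_W) ≤ B(ϱ_V). -/
theorem stmt6 {d : ℕ} (ρ₀ ϱV ϱW : Matrix (Fin d) (Fin d) ℂ)
    (V W : Submodule ℝ (Matrix (Fin d) (Fin d) ℂ))
    (hVW : V ≤ W)
    (hVH : ∀ A ∈ W, A.IsHermitian)
    (hρ₀ : ρ₀.PosSemidef) (htρ₀ : ρ₀.trace = 1)
    (hϱVmem : ϱV ∈ V)
    (hϱVorth : ∀ B ∈ V, Matrix.trace ((ρ₀ - ϱV) * B) = 0)
    (hϱWmem : ϱW ∈ W)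
    (hϱWorth : ∀ B ∈ W, Matrix.trace ((ρ₀ - ϱW) * B) = 0) :
    Real.sqrt (1 - (Matrix.trace (ϱW * ϱW)).re) +
        Real.sqrt ((Matrix.trace (ρ₀ * ρ₀)).re - (Matrix.trace (ϱW * ϱW)).re) ≤
      Real.sqrt (1 - (Matrix.trace (ϱV * ϱV)).re) +
        Real.sqrt ((Matrix.trace (ρ₀ * ρ₀)).re - (Matrix.trace (ϱV * ϱV)).re) := by
  -- key inner products
  have hVV : Matrix.trace (ρ₀ * ϱV) = Matrix.trace (ϱV * ϱV) := by
    have := hϱVorth ϱV hϱVmem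
    rw [Matrix.sub_mul, Matrix.trace_sub, sub_eq_zero] at this
    exact this
  have hWW : Matrix.trace (ρ₀ * ϱW) = Matrix.trace (ϱW * ϱW) := by
    have := hϱWorth ϱW hϱWmem
    rw [Matrix.sub_mul, Matrix.trace_sub, sub_eq_zero] at this
    exact this
  have hWV : Matrix.trace (ϱW * ϱV) = Matrix.trace (ϱV * ϱV) := by
    have := hϱWorth ϱV (hVW hϱVmem)
    rw [Matrix.sub_mul, Matrix.trace_sub, sub_eq_zero] at this
    rw [← this, ← hVV]
  -- ϱW - ϱV is Hermitian
  have hHerm : (ϱW - ϱV).IsHermitian :=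
    (hVH ϱW hϱWmem).sub (hVH ϱV (hVW hϱVmem))
  have hkey : (Matrix.trace (ϱV * ϱV)).re ≤ (Matrix.trace (ϱW * ϱW)).re := by
    have h0 := trace_sq_re_nonneg _ hHerm
    have hexp : Matrix.trace ((ϱW - ϱV) * (ϱW - ϱV)) =
        Matrix.trace (ϱW * ϱW) - Matrix.trace (ϱV * ϱV) := by
      rw [Matrix.sub_mul, Matrix.mul_sub, Matrix.mul_sub, Matrix.trace_sub,
        Matrix.trace_sub, Matrix.trace_sub, Matrix.trace_mul_comm ϱV ϱW, hWV]
      ring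
    rw [hexp, Complex.sub_re] at h0
    linarith
  exact add_le_add (Real.sqrt_le_sqrt (by linarith)) (Real.sqrt_le_sqrt (by linarith))
end
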